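/- Under the IM-OCP dynamics with nonincreasing step sizes η_t, for every u ∈ ℝ and every horizon T ≥ 1, the importance-weighted regret satisfies Σ_{t=1}^T ( ℓ_{1−α}(r_t, r*_t) − ℓ_{1−α}(u, r*_t) ) · obs_t/p_t ≤ (max_{1 ≤ t ≤ T} B_R(u, r_t))/η_T + (1/(2μ)) · Σ_{t=1}^T η_t · (obs_t/p_t)². This inequality holds deterministically for every choice of the binary sequence obs_t. -/

import Mathlib

/-- The quantile (pinball) loss `ℓ_{1-α}(r, s) = (α - 1{r < s})(r - s)`. -/
noncomputable def pinball (α r s : ℝ) : ℝ := (α - if r < s then 1 else 0) * (r - s)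

lemma breg_lower (μ : ℝ) (hμ : 0 < μ) (R R' : ℝ → ℝ)
    (hR : ∀ x, HasDerivAt R (R' x) x)
    (hsc : ∀ x y, (R' x - R' y) * (x - y) ≥ μ * (x - y) ^ 2)
    (a b : ℝ) : μ / 2 * (a - b) ^ 2 ≤ R a - R b - R' b * (a - b) := by
  set φ : ℝ → ℝ := fun x => R x - R' b * x - μ / 2 * (x - b) ^ 2 with hφdef
  have hφd : ∀ x, HasDerivAt φ (R' x - R' b - μ * (x - b)) x := by
    intro x
    have h1 : HasDerivAt (fun x : ℝ => R x - R' b * x) (R' x - R' b) x := by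
      simpa [Pi.sub_def] using (hR x).sub ((hasDerivAt_id x).const_mul (R' b))
    have h2 : HasDerivAt (fun x : ℝ => μ / 2 * (x - b) ^ 2) (μ * (x - b)) x := by
      have := (((hasDerivAt_id x).sub_const b).pow 2).const_mul (μ / 2)
      refine this.congr_deriv ?_
      simp [id_eq]
      ring
    exact h1.sub h2
  have hcont : Continuous φ := by
    have : Differentiable ℝ φ := fun x => (hφd x).differentiableAt
    exact this.continuous
  have hderiv : ∀ x, deriv φ x = R' x - R' b - μ * (x - b) := fun x => (hφd x).deriv
  have key : φ b ≤ φ a := by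
    rcases le_total b a with hba | hab
    · have hmono : MonotoneOn φ (Set.Icc b a) := by
        apply monotoneOn_of_deriv_nonneg (convex_Icc b a) hcont.continuousOn
        · intro x _
          exact (hφd x).differentiableAt.differentiableWithinAt
        · intro x hx
          rw [interior_Icc] at hx
          rw [hderiv]
          have hsx := hsc x b
          have hxb : 0 < x - b := by linarith [hx.1]
          nlinarith
      exact hmono (Set.left_mem_Icc.mpr hba) (Set.mem_Icc.mpr ⟨hba, le_refl a⟩) hba
    · have hanti : AntitoneOn φ (Set.Icc a b) := by
        apply antitoneOn_of_deriv_nonpos (convex_Icc a b) hcont.continuousOn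
        · intro x _
          exact (hφd x).differentiableAt.differentiableWithinAt
        · intro x hx
          rw [interior_Icc] at hx
          rw [hderiv]
          have hsx := hsc x b
          have hxb : x - b < 0 := by linarith [hx.2]
          nlinarith
      exact hanti (Set.mem_Icc.mpr ⟨le_refl a, hab⟩) (Set.right_mem_Icc.mpr hab) hab
  have : R b - R' b * b - μ / 2 * (b - b) ^ 2 ≤ R a - R' b * a - μ / 2 * (a - b) ^ 2 := key
  linarith [this]

lemma telescope_bound (η D : ℕ → ℝ) (M : ℝ)
    (hη : ∀ t, 0 < η t) (hdec : ∀ t, η (t + 1) ≤ η t) (hD : ∀ t, 0 ≤ D t) :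
    ∀ T, 1 ≤ T → (∀ t ∈ Finset.Icc 1 T, D t ≤ M) →
      ∑ t ∈ Finset.Icc 1 T, (D t - D (t + 1)) / η t ≤ M / η T - D (T + 1) / η T := by
  intro T
  induction T with
  | zero => intro h; exact absurd h (by norm_num)
  | succ n ih =>
    intro _ hM
    rcases Nat.eq_zero_or_pos n with hn | hn
    · subst hn
      simp only [Finset.Icc_self, Finset.sum_singleton]
      have hM1 : D 1 ≤ M := hM 1 (by simp)
      have h1 := hη 1
      rw [sub_div]
      gcongr
    · have hsum := Finset.sum_Icc_succ_top (by omega : 1 ≤ n + 1)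
        (fun t => (D t - D (t + 1)) / η t)
      rw [hsum]
      have ihn := ih hn (fun t ht => hM t (by
        simp only [Finset.mem_Icc] at ht ⊢; omega))
      have hMn1 : D (n + 1) ≤ M := hM (n + 1) (by simp)
      have hinv : 1 / η n ≤ 1 / η (n + 1) :=
        one_div_le_one_div_of_le (hη (n + 1)) (hdec n)
      have e1 : D (n + 1) * (1 / η (n + 1) - 1 / η n) ≤ M * (1 / η (n + 1) - 1 / η n) :=
        mul_le_mul_of_nonneg_right hMn1 (by linarith)
      have r1 : D (n + 1) * (1 / η (n + 1) - 1 / η n)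
          = D (n + 1) / η (n + 1) - D (n + 1) / η n := by ring
      have r2 : M * (1 / η (n + 1) - 1 / η n) = M / η (n + 1) - M / η n := by ring
      have r3 : (D (n + 1) - D (n + 2)) / η (n + 1)
          = D (n + 1) / η (n + 1) - D (n + 2) / η (n + 1) := by ring
      rw [r1, r2] at e1
      linarith [ihn, e1, r3.le, r3.ge]

set_option maxHeartbeats 1600000 in
/-- Deterministic importance-weighted regret bound for IM-OCP (online mirror descent):
for every comparator `u`,
`Σ_{t=1}^T (ℓ(r_t, r*_t) - ℓ(u, r*_t)) obs_t/p_t ≤ (max_t B_R(u, r_t))/η_T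
  + (1/(2μ)) Σ_{t=1}^T η_t (obs_t/p_t)²`. -/
theorem imocp_weighted_regret_bound
    (B α μ : ℝ) (hB : 0 < B) (hα : α ∈ Set.Icc (0 : ℝ) 1) (hμ : 0 < μ)
    (rstar η p obs : ℕ → ℝ)
    (hrstar : ∀ t, rstar t ∈ Set.Icc 0 B)
    (hη : ∀ t, 0 < η t)
    (hηdec : ∀ t, η (t + 1) ≤ η t)
    (hp : ∀ t, p t ∈ Set.Ioc (0 : ℝ) 1)
    (hobs : ∀ t, obs t = 0 ∨ obs t = 1)
    (R R' : ℝ → ℝ)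
    (hR : ∀ x, HasDerivAt R (R' x) x)
    (hbij : Function.Bijective R')
    (hsc : ∀ x y, (R' x - R' y) * (x - y) ≥ μ * (x - y) ^ 2)
    (r E : ℕ → ℝ)
    (hE : ∀ t, E t = if rstar t > r t then 1 else 0)
    (hr1 : r 1 ∈ Set.Icc 0 B)
    (hupd : ∀ t, 1 ≤ t → R' (r (t + 1)) = R' (r t) - η t * (α - E t) * obs t / p t)
    (u : ℝ) (T : ℕ) (hT : 1 ≤ T) :
    ∑ t ∈ Finset.Icc 1 T, (pinball α (r t) (rstar t) - pinball α u (rstar t)) * obs t / p t ≤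
      ((Finset.Icc 1 T).sup' (Finset.nonempty_Icc.mpr hT)
          (fun t => R u - R (r t) - R' (r t) * (u - r t))) / η T +
        (1 / (2 * μ)) * ∑ t ∈ Finset.Icc 1 T, η t * (obs t / p t) ^ 2 := by
  have hαl := hα.1
  have hαr := hα.2
  obtain ⟨D, hDdef⟩ : ∃ D : ℕ → ℝ, ∀ t, D t = R u - R (r t) - R' (r t) * (u - r t) :=
    ⟨_, fun _ => rfl⟩
  have hDnn : ∀ t, 0 ≤ D t := by
    intro t
    have h1 := breg_lower μ hμ R R' hR hsc u (r t)
    have h0 : (0:ℝ) ≤ μ / 2 * (u - r t) ^ 2 := by positivity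
    rw [hDdef]
    linarith
  have step : ∀ t, 1 ≤ t →
      (pinball α (r t) (rstar t) - pinball α u (rstar t)) * obs t / p t ≤
        (D t - D (t + 1)) / η t + 1 / (2 * μ) * (η t * (obs t / p t) ^ 2) := by
    intro t ht
    have hpt := hp t
    have hηt := hη t
    obtain ⟨w, hw⟩ : ∃ w : ℝ, w = obs t / p t := ⟨_, rfl⟩
    have hwnn : 0 ≤ w := by
      rw [hw]
      exact div_nonneg (by rcases hobs t with h | h <;> simp [h]) hpt.1.le
    have hE01 : E t = 0 ∨ E t = 1 := by rw [hE]; split <;> simp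
    have hgabs : (α - E t) ^ 2 ≤ 1 := by rcases hE01 with h | h <;> rw [h] <;> nlinarith
    obtain ⟨g, hg⟩ : ∃ g : ℝ, g = (α - E t) * w := ⟨_, rfl⟩
    -- (a) subgradient inequality for pinball
    have ha : pinball α (r t) (rstar t) - pinball α u (rstar t) ≤ (α - E t) * (r t - u) := by
      rw [hE]
      simp only [pinball, gt_iff_lt]
      by_cases h1 : r t < rstar t <;> by_cases h2 : u < rstar t <;>
        simp only [h1, h2, if_true, if_false, if_pos, if_neg] <;> (try push_neg at h1) <;> (try push_neg at h2) <;> nlinarith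
    -- update equation
    have h' : R' (r (t + 1)) = R' (r t) - η t * g := by
      rw [hupd t ht, hg, hw]; ring
    obtain ⟨Dp, hDp⟩ : ∃ Dp : ℝ,
        Dp = R (r t) - R (r (t + 1)) - R' (r (t + 1)) * (r t - r (t + 1)) := ⟨_, rfl⟩
    have key0 : g * (r t - u) * η t = (D t - D (t + 1)) + Dp := by
      rw [hDp, hDdef, hDdef]
      linear_combination (r t - u) * h'
    have key : g * (r t - u) = ((D t - D (t + 1)) + Dp) / η t := by
      rw [eq_div_iff hηt.ne']; linear_combination key0
    -- bound Dp
    have hb2 := breg_lower μ hμ R R' hR hsc (r (t + 1)) (r t)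
    have hsum : Dp = η t * g * (r t - r (t + 1))
        - (R (r (t + 1)) - R (r t) - R' (r t) * (r (t + 1) - r t)) := by
      rw [hDp]; linear_combination (r (t + 1) - r t) * h'
    have hsq : (r (t + 1) - r t) ^ 2 = (r t - r (t + 1)) ^ 2 := by ring
    have h1 : Dp ≤ η t * g * (r t - r (t + 1)) - μ / 2 * (r t - r (t + 1)) ^ 2 := by
      rw [hsum]; linarith [hb2, hsq.le, hsq.ge]
    have hd' : Dp * (2 * μ) ≤ (η t * g) ^ 2 := by
      nlinarith [sq_nonneg (η t * g - μ * (r t - r (t + 1))),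
        mul_le_mul_of_nonneg_left h1 (by positivity : (0:ℝ) ≤ 2 * μ)]
    have he : (η t * g) ^ 2 ≤ (η t * w) ^ 2 := by
      have hgw : (η t * g) ^ 2 = (α - E t) ^ 2 * (η t * w) ^ 2 := by rw [hg]; ring
      rw [hgw]
      nlinarith [hgabs, sq_nonneg (η t * w)]
    have h2 : Dp / η t ≤ 1 / (2 * μ) * (η t * w ^ 2) := by
      have hq : Dp ≤ (η t * w) ^ 2 / (2 * μ) := by
        rw [le_div_iff₀ (by positivity : (0:ℝ) < 2 * μ)]
        linarith
      have h3 : Dp / η t ≤ ((η t * w) ^ 2 / (2 * μ)) / η t := by gcongr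
      have h4 : ((η t * w) ^ 2 / (2 * μ)) / η t = 1 / (2 * μ) * (η t * w ^ 2) := by
        field_simp
      linarith [h3, h4.le, h4.ge]
    calc (pinball α (r t) (rstar t) - pinball α u (rstar t)) * obs t / p t
        = (pinball α (r t) (rstar t) - pinball α u (rstar t)) * w := by
          rw [hw, mul_div_assoc]
      _ ≤ (α - E t) * (r t - u) * w := mul_le_mul_of_nonneg_right ha hwnn
      _ = g * (r t - u) := by rw [hg]; ring
      _ = ((D t - D (t + 1)) + Dp) / η t := key
      _ = (D t - D (t + 1)) / η t + Dp / η t := add_div _ _ _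
      _ ≤ (D t - D (t + 1)) / η t + 1 / (2 * μ) * (η t * (obs t / p t) ^ 2) := by
          rw [← hw]; linarith
  -- sum up
  set M : ℝ := (Finset.Icc 1 T).sup' (Finset.nonempty_Icc.mpr hT)
      (fun t => R u - R (r t) - R' (r t) * (u - r t)) with hM
  have hMle : ∀ t ∈ Finset.Icc 1 T, D t ≤ M := by
    intro t htm
    rw [hDdef]
    exact Finset.le_sup' (fun t => R u - R (r t) - R' (r t) * (u - r t)) htm
  have htel := telescope_bound η D M hη hηdec hDnn T hT hMle
  have hMη : M / η T - D (T + 1) / η T ≤ M / η T := by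
    have : 0 ≤ D (T + 1) / η T := div_nonneg (hDnn _) (hη T).le
    linarith
  calc ∑ t ∈ Finset.Icc 1 T, (pinball α (r t) (rstar t) - pinball α u (rstar t)) * obs t / p t
      ≤ ∑ t ∈ Finset.Icc 1 T,
          ((D t - D (t + 1)) / η t + 1 / (2 * μ) * (η t * (obs t / p t) ^ 2)) := by
        apply Finset.sum_le_sum
        intro t htm
        exact step t (Finset.mem_Icc.mp htm).1
    _ = (∑ t ∈ Finset.Icc 1 T, (D t - D (t + 1)) / η t)
          + ∑ t ∈ Finset.Icc 1 T, 1 / (2 * μ) * (η t * (obs t / p t) ^ 2) :=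
        Finset.sum_add_distrib
    _ ≤ M / η T + ∑ t ∈ Finset.Icc 1 T, 1 / (2 * μ) * (η t * (obs t / p t) ^ 2) := by
        have := le_trans htel hMη
        linarith
    _ = M / η T + 1 / (2 * μ) * ∑ t ∈ Finset.Icc 1 T, η t * (obs t / p t) ^ 2 := by
        rw [Finset.mul_sum]
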